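/- In the cyclic collapse construction on ℤ_N with |A| ≤ |S|, the resulting set D of filled spaces does not depend on the order in which elements of A are processed; specifically, j ∈ D if and only if j ∈ S and there exists some cyclic interval [i,j] with |A ∩ [i,j]| ≥ |S ∩ [i,j]|. -/

import Mathlib

/-- The cyclic interval `[i,j]` in `ℤ_N`. -/
def cycIcc (N : ℕ) (i j : ZMod N) : Set (ZMod N) :=
  {x : ZMod N | ∃ k : ℕ, k ≤ (j - i).val ∧ x = i + (k : ZMod N)}

section Aux
variable {N : ℕ} [NeZero N]

lemma npos : 0 < N := Nat.pos_of_ne_zero (NeZero.ne N)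

lemma cast_val_self (x : ZMod N) : ((x.val : ℕ) : ZMod N) = x := ZMod.natCast_rightInverse x

lemma val_sub_eq (x y : ZMod N) :
    (x - y).val = if y.val ≤ x.val then x.val - y.val else N + x.val - y.val := by
  have hx := ZMod.val_lt x
  have hy := ZMod.val_lt y
  split_ifs with h
  · have e : ((x.val - y.val : ℕ) : ZMod N) = x - y := by
      rw [Nat.cast_sub h, cast_val_self, cast_val_self]
    rw [← e, ZMod.val_cast_of_lt (by omega)]
  · have e : ((N + x.val - y.val : ℕ) : ZMod N) = x - y := by
      rw [Nat.cast_sub (by omega), Nat.cast_add, ZMod.natCast_self, zero_add,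
        cast_val_self, cast_val_self]
    rw [← e, ZMod.val_cast_of_lt (by omega)]

lemma mem_cycIcc {i j x : ZMod N} : x ∈ cycIcc N i j ↔ (x - i).val ≤ (j - i).val := by
  constructor
  · rintro ⟨k, hk, rfl⟩
    have hkN : k < N := lt_of_le_of_lt hk (ZMod.val_lt _)
    simpa [add_sub_cancel_left, ZMod.val_cast_of_lt hkN] using hk
  · intro h
    exact ⟨(x - i).val, h, by rw [cast_val_self]; ring⟩

lemma mem_swap (i j x : ZMod N) : (x - i).val ≤ (j - i).val ↔ (j - x).val ≤ (j - i).val := by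
  have e : x - i = (j - i) - (j - x) := by ring
  rw [e, val_sub_eq]
  have := ZMod.val_lt (j - x)
  have := ZMod.val_lt (j - i)
  split_ifs with h <;> omega

lemma mem_cycIcc' {i j x : ZMod N} : x ∈ cycIcc N i j ↔ (j - x).val ≤ (j - i).val :=
  mem_cycIcc.trans (mem_swap i j x)

lemma self_mem_cycIcc (i j : ZMod N) : j ∈ cycIcc N i j := mem_cycIcc.2 le_rfl

lemma cycIcc_subset {i j a : ZMod N} (ha : a ∈ cycIcc N i j) : cycIcc N a j ⊆ cycIcc N i j := by
  intro x hx
  exact mem_cycIcc'.2 (le_trans (mem_cycIcc'.1 hx) (mem_cycIcc'.1 ha))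

lemma forward_lem {a s w j : ZMod N} (h1 : (j - s).val < (j - w).val)
    (h2 : (j - w).val ≤ (j - a).val) : (w - a).val ≤ (s - a).val := by
  have e1 : w - a = (j - a) - (j - w) := by ring
  have e2 : s - a = (j - a) - (j - s) := by ring
  rw [e1, e2, val_sub_eq (j - a) (j - w), val_sub_eq (j - a) (j - s)]
  have := ZMod.val_lt (j - s)
  have := ZMod.val_lt (j - a)
  split_ifs <;> omega

lemma tot_lem {a s j : ZMod N} (h : ¬ ((j - s).val ≤ (j - a).val)) :
    (s - j).val ≤ (s - a).val ∧ j ≠ s := by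
  constructor
  · have e1 : s - j = (s - a) - (j - a) := by ring
    have e2 : j - s = (j - a) - (s - a) := by ring
    rw [e2, val_sub_eq (j - a) (s - a)] at h
    rw [e1, val_sub_eq (s - a) (j - a)]
    have := ZMod.val_lt (j - a)
    have := ZMod.val_lt (s - a)
    split_ifs at * <;> omega
  · rintro rfl
    simp [sub_self] at h

end Aux

open Classical in
/-- One step of the collapse process: given the service set `S`, the current set `D` of
filled spaces, and an arrival site `i`, fill the first space in the cyclic list
`i, i+1, i+2, …` that lies in `S` and is not yet filled (if such a space exists). -/
noncomputable def collapseStep (N : ℕ) (S : Set (ZMod N)) (D : Set (ZMod N))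
    (i : ZMod N) : Set (ZMod N) :=
  if h : ∃ k : ℕ, i + (k : ZMod N) ∈ S \ D then
    insert (i + ((Nat.find h : ℕ) : ZMod N)) D
  else D

section Step
variable {N : ℕ} [NeZero N]

open Classical in
lemma collapseStep_spec {S D : Set (ZMod N)} {a : ZMod N}
    (h : ∃ k : ℕ, a + (k : ZMod N) ∈ S \ D) :
    ∃ k₀ : ℕ, k₀ < N ∧ a + (k₀ : ZMod N) ∈ S \ D ∧
      (∀ k' < k₀, a + (k' : ZMod N) ∈ S → a + (k' : ZMod N) ∈ D) ∧
      collapseStep N S D a = insert (a + (k₀ : ZMod N)) D := by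
  refine ⟨Nat.find h, ?_, Nat.find_spec h, ?_, ?_⟩
  · obtain ⟨k, hk⟩ := h
    have hk' : a + ((k % N : ℕ) : ZMod N) ∈ S \ D := by rwa [ZMod.natCast_mod]
    exact lt_of_le_of_lt (Nat.find_le hk') (Nat.mod_lt _ npos)
  · intro k' hk' hS
    have := Nat.find_min h hk'
    simp only [Set.mem_diff, not_and, not_not] at this
    exact this hS
  · rw [collapseStep, dif_pos h]

/-- The invariant maintained by the collapse process: `D ⊆ S`, and there is a bijection
`φ` between filled spots and the processed arrivals `T` such that every `S`-spot strictly
between `φ s` and `s` is filled. -/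
def CollapseInv (N : ℕ) [NeZero N] (S T D : Set (ZMod N)) : Prop :=
  D ⊆ S ∧ ∃ φ : ZMod N → ZMod N, Set.InjOn φ D ∧ (∀ s ∈ D, φ s ∈ T) ∧
    (∀ t ∈ T, ∃ s ∈ D, φ s = t) ∧
    (∀ s ∈ D, ∀ x ∈ S, x ∈ cycIcc N (φ s) s → x ≠ s → x ∈ D)

lemma inv_step {S T D : Set (ZMod N)} {a : ZMod N}
    (hInv : CollapseInv N S T D) (hne : (S \ D).Nonempty) (haT : a ∉ T) :
    CollapseInv N S (insert a T) (collapseStep N S D a) := by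
  obtain ⟨hDS, φ, hinj, hmap, hsurj, hcov⟩ := hInv
  obtain ⟨y, hy⟩ := hne
  have h : ∃ k : ℕ, a + (k : ZMod N) ∈ S \ D :=
    ⟨(y - a).val, by rw [cast_val_self]; simpa using hy⟩
  obtain ⟨k₀, hk₀N, hspot, hmin, heq⟩ := collapseStep_spec h
  rw [heq]
  set s : ZMod N := a + (k₀ : ZMod N) with hs
  have hsD : s ∉ D := hspot.2
  have hsa : (s - a).val = k₀ := by
    rw [hs, add_sub_cancel_left, ZMod.val_cast_of_lt hk₀N]
  set φ' : ZMod N → ZMod N := Function.update φ s a with hφ'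
  have hφ'D : ∀ t ∈ D, φ' t = φ t := by
    intro t ht
    apply Function.update_of_ne
    rintro rfl
    exact hsD ht
  have hφ's : φ' s = a := Function.update_self _ _ _
  refine ⟨Set.insert_subset hspot.1 hDS, φ', ?_, ?_, ?_, ?_⟩
  · intro x hx y' hy' hxy
    rcases hx with rfl | hx <;> rcases hy' with rfl | hy'
    · rfl
    · exfalso
      rw [hφ's, hφ'D _ hy'] at hxy
      exact haT (hxy ▸ hmap _ hy')
    · exfalso
      rw [hφ's, hφ'D _ hx] at hxy
      exact haT (hxy ▸ hmap _ hx)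
    · exact hinj hx hy' (by rwa [hφ'D _ hx, hφ'D _ hy'] at hxy)
  · rintro t (rfl | ht)
    · rw [hφ's]; exact Set.mem_insert _ _
    · rw [hφ'D _ ht]; exact Set.mem_insert_of_mem _ (hmap _ ht)
  · rintro t (rfl | ht)
    · exact ⟨s, Set.mem_insert _ _, hφ's⟩
    · obtain ⟨s', hs'D, hφs'⟩ := hsurj t ht
      exact ⟨s', Set.mem_insert_of_mem _ hs'D, (hφ'D _ hs'D).trans hφs'⟩
  · rintro t (rfl | ht) x hxS hxmem hxt
    · rw [hφ's] at hxmem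
      obtain ⟨k', hk', rfl⟩ := hxmem
      rw [hsa] at hk'
      have hk'N : k' < N := lt_of_le_of_lt hk' hk₀N
      have : k' ≠ k₀ := by
        intro he; exact hxt (by rw [he])
      exact Set.mem_insert_of_mem _ (hmin k' (lt_of_le_of_ne hk' this) hxS)
    · rw [hφ'D _ ht] at hxmem
      exact Set.mem_insert_of_mem _ (hcov t ht x hxS hxmem hxt)

end Step

section Fold
variable {N : ℕ} [NeZero N]

lemma inv_foldl (S A : Set (ZMod N)) (hAS : A.ncard ≤ S.ncard)
    (l' : List (ZMod N)) : ∀ T D : Set (ZMod N), l'.Nodup →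
      (∀ x ∈ l', x ∉ T) → T ∪ {x | x ∈ l'} = A → CollapseInv N S T D →
      CollapseInv N S A (List.foldl (collapseStep N S) D l') := by
  induction l' with
  | nil =>
    intro T D _ _ hTl hInv
    simp only [List.foldl_nil]
    have hTA : T = A := by simpa using hTl
    rwa [hTA] at hInv
  | cons a l ih =>
    intro T D hnd hdisj hTl hInv
    simp only [List.foldl_cons]
    have haT : a ∉ T := hdisj a List.mem_cons_self
    have hcardT : T.ncard + (l.length + 1) ≤ S.ncard := by
      have hdisj' : Disjoint T {x | x ∈ a :: l} := by
        rw [Set.disjoint_left]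
        intro x hx hx'
        exact hdisj x hx' hx
      have hfin1 : ({x | x ∈ a :: l} : Set (ZMod N)) = ↑(a :: l).toFinset := by
        rw [List.coe_toFinset]
      have hcard : A.ncard = T.ncard + (l.length + 1) := by
        rw [← hTl, Set.ncard_union_eq hdisj' (Set.toFinite _) (Set.toFinite _), hfin1,
          Set.ncard_coe_finset, List.toFinset_card_of_nodup hnd, List.length_cons]
      omega
    obtain ⟨hDS, φ, hinj, hmapsTo, hsurj, hcov⟩ := hInv
    have hDcard : D.ncard ≤ T.ncard :=
      Set.ncard_le_ncard_of_injOn φ hmapsTo hinj (Set.toFinite _)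
    have hne : (S \ D).Nonempty := by
      rw [Set.diff_nonempty]
      intro hSD
      have := Set.ncard_le_ncard hSD (Set.toFinite D)
      omega
    have hstep := inv_step ⟨hDS, φ, hinj, hmapsTo, hsurj, hcov⟩ hne haT
    refine ih (insert a T) _ (List.nodup_cons.mp hnd).2 ?_ ?_ hstep
    · intro x hx
      simp only [Set.mem_insert_iff]
      push_neg
      exact ⟨fun h => (List.nodup_cons.mp hnd).1 (h ▸ hx),
        hdisj x (List.mem_cons_of_mem _ hx)⟩
    · rw [← hTl]
      ext x
      simp only [Set.mem_union, Set.mem_insert_iff, Set.mem_setOf_eq, List.mem_cons]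
      tauto

end Fold

/-- for the cyclic collapse construction on `ℤ_N` with `|A| ≤ |S|`, the set
`D` of filled spaces does not depend on the order in which the elements of `A` are
processed: for any enumeration `l` of `A`, `j` is filled iff `j ∈ S` and there is a cyclic
interval `[i,j]` with `|A ∩ [i,j]| ≥ |S ∩ [i,j]|`. -/
theorem stmt_5 (N : ℕ) [NeZero N] (A S : Set (ZMod N)) (hAS : A.ncard ≤ S.ncard)
    (l : List (ZMod N)) (hnd : l.Nodup) (hl : ∀ x, x ∈ l ↔ x ∈ A) :
    ∀ j : ZMod N,
      j ∈ l.foldl (collapseStep N S) ∅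
        ↔ (j ∈ S ∧ ∃ i : ZMod N,
            (S ∩ cycIcc N i j).ncard ≤ (A ∩ cycIcc N i j).ncard) := by
  classical
  have hA : {x | x ∈ l} = A := by ext x; exact hl x
  have hInv0 : CollapseInv N S ∅ ∅ :=
    ⟨Set.empty_subset _, id, by simp [Set.InjOn], by simp, by simp, by simp⟩
  have hInv := inv_foldl S A hAS l ∅ ∅ hnd (by simp) (by rw [Set.empty_union, hA]) hInv0
  intro j
  set D := l.foldl (collapseStep N S) ∅ with hD
  obtain ⟨hDS, φ, hinj, hmap, hsurj, hcov⟩ := hInv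
  constructor
  · intro hjD
    refine ⟨hDS hjD, ?_⟩
    by_cases hcase : ∀ x ∈ S, x ∈ D
    · -- all of S is filled: take the full circle
      refine ⟨j - ((N - 1 : ℕ) : ZMod N), ?_⟩
      have hIall : ∀ x : ZMod N, x ∈ cycIcc N (j - ((N - 1 : ℕ) : ZMod N)) j := by
        intro x
        rw [mem_cycIcc']
        have e : j - (j - ((N - 1 : ℕ) : ZMod N)) = ((N - 1 : ℕ) : ZMod N) := by ring
        rw [e, ZMod.val_cast_of_lt (by have := npos (N := N); omega)]
        have := ZMod.val_lt (j - x)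
        have := npos (N := N)
        omega
      have eS : S ∩ cycIcc N (j - ((N - 1 : ℕ) : ZMod N)) j = S :=
        Set.inter_eq_left.mpr (fun x _ => hIall x)
      have eA : A ∩ cycIcc N (j - ((N - 1 : ℕ) : ZMod N)) j = A :=
        Set.inter_eq_left.mpr (fun x _ => hIall x)
      rw [eS, eA]
      have h1 : S.ncard ≤ D.ncard :=
        Set.ncard_le_ncard (fun x hx => hcase x hx) (Set.toFinite _)
      have h2 : D.ncard ≤ A.ncard := Set.ncard_le_ncard_of_injOn φ hmap hinj (Set.toFinite _)
      omega
    · push_neg at hcase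
      obtain ⟨x₀, hx₀S, hx₀D⟩ := hcase
      have hex : ∃ m, ¬ (∀ x ∈ S, (j - x).val ≤ m → x ∈ D) :=
        ⟨(j - x₀).val, fun hC => hx₀D (hC x₀ hx₀S le_rfl)⟩
      obtain ⟨m₀, hm₀spec, hm₀min⟩ :
          ∃ m, (¬ ∀ x ∈ S, (j - x).val ≤ m → x ∈ D) ∧
            ∀ k < m, ∀ x ∈ S, (j - x).val ≤ k → x ∈ D :=
        ⟨Nat.find hex, Nat.find_spec hex, fun k hk => not_not.mp (Nat.find_min hex hk)⟩
      push_neg at hm₀spec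
      obtain ⟨w, hwS, hwv, hwD⟩ := hm₀spec
      have hC0 : ∀ x ∈ S, (j - x).val ≤ 0 → x ∈ D := by
        intro x _ hx0
        have h0 : j - x = 0 := (ZMod.val_eq_zero _).1 (Nat.le_zero.mp hx0)
        have hjx : j = x := sub_eq_zero.mp h0
        exact hjx ▸ hjD
      have hm₀pos : 0 < m₀ := by
        rcases Nat.eq_zero_or_pos m₀ with h0 | h
        · exact absurd (hC0 w hwS (h0 ▸ hwv)) hwD
        · exact h
      have hprev : ∀ x ∈ S, (j - x).val ≤ m₀ - 1 → x ∈ D :=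
        hm₀min (m₀ - 1) (Nat.sub_lt hm₀pos one_pos)
      have hwv' : (j - w).val = m₀ := by
        rcases Nat.lt_or_ge (j - w).val m₀ with h | h
        · exact absurd (hprev w hwS (by omega)) hwD
        · omega
      have hm₀N : m₀ < N := hwv' ▸ ZMod.val_lt (j - w)
      set i := j - ((m₀ - 1 : ℕ) : ZMod N) with hidef
      have hji : (j - i).val = m₀ - 1 := by
        rw [hidef, sub_sub_cancel, ZMod.val_cast_of_lt (by omega)]
      have hmemI : ∀ x : ZMod N, x ∈ cycIcc N i j ↔ (j - x).val ≤ m₀ - 1 := by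
        intro x; rw [mem_cycIcc', hji]
      have hSID : S ∩ cycIcc N i j ⊆ D := by
        rintro x ⟨hxS, hxI⟩
        exact hprev x hxS ((hmemI x).1 hxI)
      refine ⟨i, Set.ncard_le_ncard_of_injOn φ ?_ (hinj.mono hSID) (Set.toFinite _)⟩
      rintro s' ⟨hs'S, hs'I⟩
      refine ⟨hmap s' (hSID ⟨hs'S, hs'I⟩), ?_⟩
      by_contra hnI
      rw [hmemI] at hnI
      have h2 : m₀ ≤ (j - φ s').val := by omega
      have h1 : (j - s').val < (j - w).val := by
        rw [hwv']
        have := (hmemI s').1 hs'I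
        omega
      have hwmem : w ∈ cycIcc N (φ s') s' := mem_cycIcc.2 (forward_lem h1 (by omega))
      have hwne : w ≠ s' := by
        rintro rfl
        exact hwD (hSID ⟨hs'S, hs'I⟩)
      exact hwD (hcov s' (hSID ⟨hs'S, hs'I⟩) w hwS hwmem hwne)
  · rintro ⟨hjS, i, hI⟩
    by_contra hjD
    have hjI : j ∈ cycIcc N i j := self_mem_cycIcc i j
    have hfex : ∀ a' : ZMod N, a' ∈ A → ∃ s, s ∈ D ∧ φ s = a' := fun a' ha' => hsurj a' ha'
    choose f hfD hfφ using hfex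
    have hgmaps : ∀ a' ∈ A ∩ cycIcc N i j,
        (if h : a' ∈ A then f a' h else a') ∈ (S ∩ cycIcc N i j) \ {j} := by
      rintro a' ⟨ha'A, ha'I⟩
      rw [dif_pos ha'A]
      have hsD : f a' ha'A ∈ D := hfD a' ha'A
      have hφs : φ (f a' ha'A) = a' := hfφ a' ha'A
      have hsj : f a' ha'A ≠ j := by
        rintro he
        exact hjD (he ▸ hsD)
      have hsmem : f a' ha'A ∈ cycIcc N a' j := by
        by_contra hn
        rw [mem_cycIcc'] at hn
        obtain ⟨hle, hne⟩ := tot_lem hn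
        have hjmem : j ∈ cycIcc N (φ (f a' ha'A)) (f a' ha'A) := by
          rw [hφs]
          exact mem_cycIcc'.2 hle
        exact hjD (hcov _ hsD j hjS hjmem hne)
      exact ⟨⟨hDS hsD, cycIcc_subset ha'I hsmem⟩, hsj⟩
    have hginj : Set.InjOn (fun a' => if h : a' ∈ A then f a' h else a') (A ∩ cycIcc N i j) := by
      rintro a₁ ⟨h1A, _⟩ a₂ ⟨h2A, _⟩ he
      simp only [dif_pos h1A, dif_pos h2A] at he
      rw [← hfφ a₁ h1A, ← hfφ a₂ h2A, he]
    have hcard1 : (A ∩ cycIcc N i j).ncard ≤ ((S ∩ cycIcc N i j) \ {j}).ncard :=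
      Set.ncard_le_ncard_of_injOn _ hgmaps hginj (Set.toFinite _)
    have hcard2 : ((S ∩ cycIcc N i j) \ {j}).ncard < (S ∩ cycIcc N i j).ncard :=
      Set.ncard_lt_ncard (Set.sdiff_singleton_ssubset.2 ⟨hjS, hjI⟩) (Set.toFinite _)
    omega
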